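/- Let F be a field, h ≤ k ≤ n, A ∈ F^{h×(n−h)}, B ∈ F^{(k−h)×(n−h)} with A·A^T = −I_h, A·B^T = 0, and rank(B·B^T) = k − h. Let 0 ≤ ℓ ≤ h and suppose Y ∈ GL_{h−ℓ}(F) satisfies that Y·Y^T − I_{h−ℓ} is invertible. Set X = diag(Y, I_ℓ) ∈ GL_h(F), M = diag(X, I_{n−h}) ∈ GL_n(F), and G' = [I_h A; 0 B]·M. Then rank(G'·G'^T) = k − ℓ. -/

import Mathlib

open Matrix

lemma isUnit_of_rank_eq_card {F : Type*} [Field F] {n : Type*} [Fintype n] [DecidableEq n]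
    (C : Matrix n n F) (h : C.rank = Fintype.card n) : IsUnit C := by
  have hrange : LinearMap.range C.mulVecLin = ⊤ := by
    apply Submodule.eq_top_of_finrank_eq
    rw [← Matrix.rank, h, Module.finrank_pi]
  have hsurj : Function.Surjective C.mulVecLin := LinearMap.range_eq_top.mp hrange
  have hinj : Function.Injective C.mulVec := by
    have := LinearMap.injective_iff_surjective.mpr hsurj
    simpa [Matrix.coe_mulVecLin] using this
  exact Matrix.mulVec_injective_iff_isUnit.mp hinj

/-- The key rank computation of Theorem 3.4: here `h = t + ℓ` (so `t = h - ℓ`),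
`k = h + r` and `n = h + p`, `G = [I_h A; 0 B]`, `X = diag(Y, I_ℓ)`,
`M = diag(X, I_{n-h})` and `G' = G * M`; then `rank (G' * G'ᵀ) = k - ℓ`. -/
theorem rank_transformed_gram {F : Type*} [Field F] {t ℓ r p : ℕ}
    (A : Matrix (Fin t ⊕ Fin ℓ) (Fin p) F) (B : Matrix (Fin r) (Fin p) F)
    (Y : Matrix (Fin t) (Fin t) F) (hY : IsUnit Y) (hY' : IsUnit (Y * Yᵀ - 1))
    (hA : A * Aᵀ = -1) (hAB : A * Bᵀ = 0) (hB : (B * Bᵀ).rank = r)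
    (G : Matrix ((Fin t ⊕ Fin ℓ) ⊕ Fin r) ((Fin t ⊕ Fin ℓ) ⊕ Fin p) F)
    (X : Matrix (Fin t ⊕ Fin ℓ) (Fin t ⊕ Fin ℓ) F)
    (M : Matrix ((Fin t ⊕ Fin ℓ) ⊕ Fin p) ((Fin t ⊕ Fin ℓ) ⊕ Fin p) F)
    (hX : X = Matrix.fromBlocks Y 0 0 (1 : Matrix (Fin ℓ) (Fin ℓ) F))
    (hM : M = Matrix.fromBlocks X 0 0 (1 : Matrix (Fin p) (Fin p) F))
    (hG : G = Matrix.fromBlocks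
        (1 : Matrix (Fin t ⊕ Fin ℓ) (Fin t ⊕ Fin ℓ) F) A 0 B) :
    ((G * M) * (G * M)ᵀ).rank = (t + ℓ + r) - ℓ := by
  classical
  set W : Matrix (Fin t) (Fin t) F := Y * Yᵀ - 1 with hW
  -- Step 1 : G * M = [X A; 0 B]
  have hGM : G * M = fromBlocks X A 0 B := by
    subst hG hM
    rw [fromBlocks_multiply]
    simp
  -- Step 2 : the Gram matrix is block diagonal
  have hXX : X * Xᵀ + A * Aᵀ = fromBlocks W 0 0 0 := by
    subst hX
    rw [hA, fromBlocks_transpose, fromBlocks_multiply]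
    simp only [transpose_zero, transpose_one, Matrix.mul_zero, Matrix.zero_mul,
      Matrix.mul_one, Matrix.one_mul, add_zero, zero_add]
    rw [← sub_eq_add_neg, ← fromBlocks_one (l := Fin t) (m := Fin ℓ) (α := F)]
    ext (i | i) (j | j) <;> simp [fromBlocks, hW, Matrix.sub_apply]
  have hBA : B * Aᵀ = 0 := by
    have := congrArg Matrix.transpose hAB
    simpa using this
  have hN : (G * M) * (G * M)ᵀ = fromBlocks (fromBlocks W 0 0 0) 0 0 (B * Bᵀ) := by
    rw [hGM, fromBlocks_transpose, fromBlocks_multiply]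
    simp [hAB, hBA, hXX]
  -- Step 3 : factor as (unit) * (diagonal 0/1 matrix)
  have hfac : fromBlocks (fromBlocks W 0 0 (0 : Matrix (Fin ℓ) (Fin ℓ) F)) 0 0 (B * Bᵀ) =
      (fromBlocks (fromBlocks W 0 0 (1 : Matrix (Fin ℓ) (Fin ℓ) F)) 0 0 (B * Bᵀ)) *
      (fromBlocks (fromBlocks (1 : Matrix (Fin t) (Fin t) F) 0 0
        (0 : Matrix (Fin ℓ) (Fin ℓ) F)) 0 0 (1 : Matrix (Fin r) (Fin r) F)) := by
    rw [fromBlocks_multiply, fromBlocks_multiply]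
    simp only [Matrix.mul_zero, Matrix.zero_mul, Matrix.mul_one, Matrix.one_mul,
      add_zero, zero_add]
  have hBBunit : IsUnit (B * Bᵀ) := by
    apply isUnit_of_rank_eq_card
    rw [Fintype.card_fin]
    exact hB
  have hLunit : IsUnit (fromBlocks (fromBlocks W 0 0 (1 : Matrix (Fin ℓ) (Fin ℓ) F)) 0 0
      (B * Bᵀ)) := by
    rw [isUnit_fromBlocks_zero₂₁, isUnit_fromBlocks_zero₂₁]
    exact ⟨⟨hY', isUnit_one⟩, hBBunit⟩
  -- Step 4 : compute the rank of the 0/1 diagonal matrix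
  have hdiag : (fromBlocks (fromBlocks (1 : Matrix (Fin t) (Fin t) F) 0 0
      (0 : Matrix (Fin ℓ) (Fin ℓ) F)) 0 0 (1 : Matrix (Fin r) (Fin r) F)) =
      diagonal (Sum.elim (Sum.elim (fun _ => (1 : F)) (fun _ => 0)) (fun _ => 1)) := by
    rw [← diagonal_one, ← diagonal_zero, fromBlocks_diagonal, ← diagonal_one,
      fromBlocks_diagonal]
  rw [hN, hfac, Matrix.rank_mul_eq_right_of_isUnit_det _ _
      ((Matrix.isUnit_iff_isUnit_det _).mp hLunit), hdiag, Matrix.rank_diagonal]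
  -- count the nonzero diagonal entries
  have hcard : Fintype.card {i : (Fin t ⊕ Fin ℓ) ⊕ Fin r //
      Sum.elim (Sum.elim (fun _ => (1 : F)) (fun _ => 0)) (fun _ => 1) i ≠ 0} = t + r := by
    refine Eq.trans (Fintype.card_congr {
      toFun := fun i => match i with
        | ⟨.inl (.inl a), _⟩ => .inl a
        | ⟨.inl (.inr b), h⟩ => absurd rfl h
        | ⟨.inr c, _⟩ => .inr c
      invFun := Sum.elim (fun a => ⟨.inl (.inl a), one_ne_zero⟩)
        (fun c => ⟨.inr c, one_ne_zero⟩)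
      left_inv := ?_
      right_inv := ?_ }) (by simp)
    · rintro ⟨(a | b) | c, h⟩
      · rfl
      · exact absurd rfl h
      · rfl
    · rintro (a | c) <;> rfl
  rw [hcard]
  omega
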